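/- For all b ∈ (0,1), the power series identity ∑_{n≥1} (Γ(n) Γ(1/2) / (2n Γ(n+1/2))) b^{2n} = (arcsin b)^2 holds. -/

import Mathlib

open Real

noncomputable def myc (n : ℕ) : ℝ :=
  Real.Gamma ((n:ℝ)+1) * Real.Gamma (1/2) / Real.Gamma ((n:ℝ)+1+1/2)

lemma myc_pos (n : ℕ) : 0 < myc n := by
  apply div_pos (mul_pos (Real.Gamma_pos_of_pos (by positivity))
    (Real.Gamma_pos_of_pos (by norm_num)))
    (Real.Gamma_pos_of_pos (by positivity))

lemma myc_zero : myc 0 = 2 := by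
  have hg := (Real.Gamma_pos_of_pos (show (0:ℝ) < 1/2 by norm_num)).ne'
  rw [myc]
  push_cast
  rw [show ((0:ℝ)+1+1/2) = 1/2 + 1 by ring,
    Real.Gamma_add_one (show (1:ℝ)/2 ≠ 0 by norm_num)]
  rw [show ((0:ℝ)+1) = 1 by ring, Real.Gamma_one]
  field_simp

lemma myc_rec (n : ℕ) : (2*(n:ℝ)+3) * myc (n+1) = (2*(n:ℝ)+2) * myc n := by
  have hg := (Real.Gamma_pos_of_pos (show (0:ℝ) < (n:ℝ)+1+1/2 by positivity)).ne'
  have hg2 := (Real.Gamma_pos_of_pos (show (0:ℝ) < (n:ℝ)+1 by positivity)).ne'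
  rw [myc, myc]
  push_cast
  rw [show ((n:ℝ)+1+1+1/2) = ((n:ℝ)+1+1/2)+1 by ring,
    Real.Gamma_add_one (show ((n:ℝ)+1+1/2) ≠ 0 by positivity),
    show ((n:ℝ)+1+1) = ((n:ℝ)+1)+1 from rfl,
    Real.Gamma_add_one (show ((n:ℝ)+1) ≠ 0 by positivity)]
  field_simp
  ring

lemma myc_le (n : ℕ) : myc n ≤ 2 := by
  induction n with
  | zero => rw [myc_zero]
  | succ k ih =>
      have h := myc_rec k
      have hp := myc_pos (k+1)
      nlinarith [myc_pos k]

noncomputable def fF (n : ℕ) (x : ℝ) : ℝ := myc n / (2*((n:ℝ)+1)) * x^(2*(n+1))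
noncomputable def fD1 (n : ℕ) (x : ℝ) : ℝ := myc n * x^(2*n+1)
noncomputable def fD2 (n : ℕ) (x : ℝ) : ℝ := (2*(n:ℝ)+1) * myc n * x^(2*n)

lemma hasDerivAt_fF (n : ℕ) (x : ℝ) : HasDerivAt (fF n) (fD1 n x) x := by
  have h := (hasDerivAt_pow (2*(n+1)) x).const_mul (myc n / (2*((n:ℝ)+1)))
  refine h.congr_deriv ?_
  rw [fD1, show 2*(n+1)-1 = 2*n+1 from by omega]
  have hne : ((n:ℝ)+1) ≠ 0 := by positivity
  push_cast
  field_simp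

lemma hasDerivAt_fD1 (n : ℕ) (x : ℝ) : HasDerivAt (fD1 n) (fD2 n x) x := by
  have h := (hasDerivAt_pow (2*n+1) x).const_mul (myc n)
  refine h.congr_deriv ?_
  rw [fD2, show 2*n+1-1 = 2*n from by omega]
  push_cast
  ring

lemma fF_zero (n : ℕ) : fF n 0 = 0 := by
  simp [fF, zero_pow (show 2*(n+1) ≠ 0 by omega)]

lemma fD1_zero (n : ℕ) : fD1 n 0 = 0 := by
  simp [fD1, zero_pow (show 2*n+1 ≠ 0 by omega)]

set_option maxHeartbeats 1600000 in
theorem stmt2 (b : ℝ) (hb : b ∈ Set.Ioo (0:ℝ) 1) :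
    ∑' n : ℕ, (Real.Gamma ((n:ℝ)+1) * Real.Gamma (1/2) /
        (2*((n:ℝ)+1) * Real.Gamma ((n:ℝ)+1+1/2))) * b^(2*(n+1))
      = (Real.arcsin b)^2 := by
  obtain ⟨hb0, hb1⟩ := hb
  set r : ℝ := (b+1)/2 with hr
  have hr0 : 0 < r := by simp only [hr]; linarith
  have hr1 : r < 1 := by simp only [hr]; linarith
  have hbr : b < r := by simp only [hr]; linarith
  set s : Set ℝ := Set.Ioo (-r) r with hsdef
  have hs_open : IsOpen s := isOpen_Ioo
  have hs_conn : IsPreconnected s := (convex_Ioo (-r) r).isPreconnected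
  have h0s : (0:ℝ) ∈ s := by constructor <;> simp [hr0] <;> linarith
  have hbs : b ∈ s := by constructor <;> [linarith; exact hbr]
  have hr2 : r^2 < 1 := by nlinarith
  have hgeo : Summable (fun n : ℕ => (r^2)^n) :=
    summable_geometric_of_lt_one (by positivity) hr2
  -- bounds
  set u1 : ℕ → ℝ := fun n => 2 * r * (r^2)^n with hu1def
  set u2 : ℕ → ℝ := fun n => 2*(2*(n:ℝ)+1) * (r^2)^n with hu2def
  have hu1 : Summable u1 := hgeo.mul_left (2*r)
  have hu2 : Summable u2 := by
    have hA : Summable (fun n : ℕ => (n:ℝ)^1 * (r^2)^n) :=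
      summable_pow_mul_geometric_of_norm_lt_one 1
        (by rw [Real.norm_eq_abs, abs_of_nonneg (by positivity)]; exact hr2)
    have := (hA.mul_left 4).add (hgeo.mul_left 2)
    apply this.congr
    intro n
    simp only [hu2def, pow_one]
    ring
  have habs : ∀ x ∈ s, |x| ≤ r := by
    intro x hx
    exact (abs_lt.mpr ⟨hx.1, hx.2⟩).le
  have hbound1 : ∀ (n : ℕ), ∀ x ∈ s, ‖fD1 n x‖ ≤ u1 n := by
    intro n x hx
    have h1 : ‖fD1 n x‖ = myc n * |x|^(2*n+1) := by
      rw [fD1, Real.norm_eq_abs, abs_mul, abs_of_pos (myc_pos n), abs_pow]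
    rw [h1]
    calc myc n * |x|^(2*n+1) ≤ 2 * r^(2*n+1) := by
          apply mul_le_mul (myc_le n)
            (pow_le_pow_left₀ (abs_nonneg x) (habs x hx) _) (by positivity) (by norm_num)
      _ = u1 n := by rw [hu1def]; simp only []; rw [pow_succ, pow_mul]; ring
  have hbound2 : ∀ (n : ℕ), ∀ x ∈ s, ‖fD2 n x‖ ≤ u2 n := by
    intro n x hx
    have h1 : ‖fD2 n x‖ = (2*(n:ℝ)+1) * myc n * |x|^(2*n) := by
      rw [fD2, Real.norm_eq_abs, abs_mul, abs_mul, abs_pow,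
        abs_of_pos (myc_pos n), abs_of_pos (by positivity)]
    rw [h1]
    calc (2*(n:ℝ)+1) * myc n * |x|^(2*n)
        ≤ (2*(n:ℝ)+1) * 2 * r^(2*n) := by
          apply mul_le_mul (mul_le_mul_of_nonneg_left (myc_le n) (by positivity))
            (pow_le_pow_left₀ (abs_nonneg x) (habs x hx) _) (by positivity) (by positivity)
      _ = u2 n := by rw [hu2def]; simp only []; rw [pow_mul]; ring
  have hsum0F : Summable (fun n => fF n 0) := by
    simp only [fF_zero]; exact summable_zero
  have hsum0D1 : Summable (fun n => fD1 n 0) := by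
    simp only [fD1_zero]; exact summable_zero
  -- termwise derivatives
  have hF1 : ∀ x ∈ s, HasDerivAt (fun y => ∑' n, fF n y) (∑' n, fD1 n x) x := by
    intro x hx
    exact hasDerivAt_tsum_of_isPreconnected hu1 hs_open hs_conn
      (fun n y _ => hasDerivAt_fF n y) (fun n y hy => hbound1 n y hy) h0s hsum0F hx
  have hF2 : ∀ x ∈ s, HasDerivAt (fun y => ∑' n, fD1 n y) (∑' n, fD2 n x) x := by
    intro x hx
    exact hasDerivAt_tsum_of_isPreconnected hu2 hs_open hs_conn
      (fun n y _ => hasDerivAt_fD1 n y) (fun n y hy => hbound2 n y hy) h0s hsum0D1 hx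
  -- the key ODE for the series
  have key : ∀ x ∈ s, (1-x^2) * (∑' n, fD2 n x) - x * (∑' n, fD1 n x) = 2 := by
    intro x hx
    have S1 : Summable (fun n => fD1 n x) :=
      Summable.of_norm_bounded hu1 (fun n => hbound1 n x hx)
    have S2 : Summable (fun n => fD2 n x) :=
      Summable.of_norm_bounded hu2 (fun n => hbound2 n x hx)
    have S2' : Summable (fun n => fD2 (n+1) x) := (summable_nat_add_iff 1).mpr S2
    calc (1-x^2) * (∑' n, fD2 n x) - x * (∑' n, fD1 n x)
        = (∑' n, (1-x^2) * fD2 n x) - ∑' n, x * fD1 n x := by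
          rw [tsum_mul_left, tsum_mul_left]
      _ = ∑' n, ((1-x^2) * fD2 n x - x * fD1 n x) :=
          (Summable.tsum_sub (S2.mul_left _) (S1.mul_left _)).symm
      _ = ∑' n, (fD2 n x - fD2 (n+1) x) := by
          apply tsum_congr
          intro n
          simp only [fD1, fD2]
          push_cast
          linear_combination (x^(2*n+2)) * (myc_rec n)
      _ = (∑' n, fD2 n x) - ∑' n, fD2 (n+1) x := Summable.tsum_sub S2 S2'
      _ = fD2 0 x := by rw [Summable.tsum_eq_zero_add S2]; ring
      _ = 2 := by simp [fD2, myc_zero]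
  -- facts about x in s
  have hfacts : ∀ x ∈ s, x ≠ -1 ∧ x ≠ 1 ∧ 0 < 1 - x^2 := by
    intro x hx
    obtain ⟨hx1, hx2⟩ := hx
    have h1 : -1 < x := by linarith
    have h2 : x < 1 := by linarith
    exact ⟨by linarith, by linarith, by nlinarith⟩
  -- W := sqrt(1-x^2) * (F' - G') has zero derivative
  set W : ℝ → ℝ := fun y =>
    Real.sqrt (1-y^2) * ((∑' n, fD1 n y) - 2*Real.arcsin y / Real.sqrt (1-y^2)) with hWdef
  have hW : ∀ x ∈ s, HasDerivAt W 0 x := by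
    intro x hx
    obtain ⟨hne1, hne2, h1x⟩ := hfacts x hx
    have hsq : 0 < Real.sqrt (1-x^2) := Real.sqrt_pos.mpr h1x
    have hsq2 : (Real.sqrt (1-x^2))^2 = 1-x^2 := Real.sq_sqrt h1x.le
    have hsqrtD : HasDerivAt (fun y : ℝ => Real.sqrt (1-y^2)) (-x / Real.sqrt (1-x^2)) x := by
      have hinner : HasDerivAt (fun y : ℝ => 1-y^2) (-(2*x)) x := by
        simpa using ((hasDerivAt_pow 2 x).const_sub 1)
      have h := hinner.sqrt (ne_of_gt h1x)
      convert h using 1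
      ring
    have hnum : HasDerivAt (fun y : ℝ => 2*Real.arcsin y) (2 / Real.sqrt (1-x^2)) x := by
      have h := (Real.hasDerivAt_arcsin hne1 hne2).const_mul (2:ℝ)
      refine h.congr_deriv ?_
      ring
    have hGb := hnum.div hsqrtD (ne_of_gt hsq)
    have hdiff := (hF2 x hx).sub hGb
    have hWx := hsqrtD.mul hdiff
    have hzero : -x / Real.sqrt (1-x^2) * ((∑' n, fD1 n x) - 2*Real.arcsin x / Real.sqrt (1-x^2))
        + Real.sqrt (1-x^2) * ((∑' n, fD2 n x) -
          (2 / Real.sqrt (1-x^2) * Real.sqrt (1-x^2) -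
            2*Real.arcsin x * (-x / Real.sqrt (1-x^2))) / (Real.sqrt (1-x^2))^2) = 0 := by
      have hkey := key x hx
      field_simp
      linear_combination (Real.sqrt (1-x^2)) * hkey
        + Real.sqrt (1-x^2) * (∑' n, fD2 n x) * hsq2
    simp only [Pi.sub_apply, Pi.div_apply] at hWx
    rw [hzero] at hWx
    exact hWx
  -- W is constant on s, and W 0 = 0
  have hF10 : (∑' n, fD1 n 0) = 0 := by
    rw [tsum_congr fD1_zero, tsum_zero]
  have hW0 : W 0 = 0 := by
    simp [hWdef, hF10, Real.arcsin_zero]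
  have hWconst : ∀ x ∈ s, W x = 0 := by
    intro x hx
    have hmvt := Convex.norm_image_sub_le_of_norm_hasDerivWithin_le
      (f := W) (f' := fun _ => (0:ℝ)) (C := 0)
      (fun y hy => (hW y hy).hasDerivWithinAt)
      (fun y _ => by simp) (convex_Ioo (-r) r) h0s hx
    rw [hW0] at hmvt
    simp only [zero_mul, sub_zero] at hmvt
    exact norm_le_zero_iff.mp hmvt
  have hF1G1 : ∀ x ∈ s, (∑' n, fD1 n x) = 2*Real.arcsin x / Real.sqrt (1-x^2) := by
    intro x hx
    obtain ⟨_, _, h1x⟩ := hfacts x hx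
    have hsq : 0 < Real.sqrt (1-x^2) := Real.sqrt_pos.mpr h1x
    have := hWconst x hx
    rw [hWdef] at this
    have := mul_eq_zero.mp this
    rcases this with h | h
    · exact absurd h (ne_of_gt hsq)
    · linarith [sub_eq_zero.mp h]
  -- Z := F - arcsin^2 has zero derivative on s
  set Z : ℝ → ℝ := fun y => (∑' n, fF n y) - Real.arcsin y ^ 2 with hZdef
  have hZ : ∀ x ∈ s, HasDerivAt Z 0 x := by
    intro x hx
    obtain ⟨hne1, hne2, h1x⟩ := hfacts x hx
    have hGa : HasDerivAt (fun y => Real.arcsin y ^ 2)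
        (2*Real.arcsin x / Real.sqrt (1-x^2)) x := by
      have h := (Real.hasDerivAt_arcsin hne1 hne2).pow 2
      refine h.congr_deriv ?_
      push_cast
      ring
    have h := (hF1 x hx).sub hGa
    rw [hF1G1 x hx, sub_self] at h
    exact h
  have hZ0 : Z 0 = 0 := by
    have hFz : (∑' n, fF n 0) = 0 := by rw [tsum_congr fF_zero, tsum_zero]
    simp [hZdef, hFz, Real.arcsin_zero]
  have hZb : Z b = 0 := by
    have hmvt := Convex.norm_image_sub_le_of_norm_hasDerivWithin_le
      (f := Z) (f' := fun _ => (0:ℝ)) (C := 0)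
      (fun y hy => (hZ y hy).hasDerivWithinAt)
      (fun y _ => by simp) (convex_Ioo (-r) r) h0s hbs
    rw [hZ0] at hmvt
    simp only [zero_mul, sub_zero] at hmvt
    exact norm_le_zero_iff.mp hmvt
  -- conclude
  have hfinal : (∑' n, fF n b) = Real.arcsin b ^ 2 := by
    have := hZb
    rw [hZdef] at this
    linarith [sub_eq_zero.mp this]
  rw [← hfinal]
  apply tsum_congr
  intro n
  rw [fF, myc]
  have h1 := (Real.Gamma_pos_of_pos (show (0:ℝ) < (n:ℝ)+1+1/2 by positivity)).ne'
  have h2 : ((n:ℝ)+1) ≠ 0 := by positivity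
  field_simp
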